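/- Suppose γ_{d,0} = 0, τ_{1,1} = τ_{2,1} = 0, A_2 > A_1, and β_1 = β_2 = β ∈ (0,1). Then Y_1 − Y_1* = −(β/(1+β))·A_2·γ_{c,0}·T_0 ≤ 0, where γ_{c,0} = 1 − γ_{1,0} − γ_{2,0}; and if T_0 > 0, then Y_1 − Y_1* < 0 if and only if the diverted fraction γ_{c,0} > 0. -/
import Mathlib


open Set

/-- Date-0 government revenue `T0 = τ10·w1 + τ20·w2`. -/
noncomputable def T0 (w1 w2 τ10 τ20 : ℝ) : ℝ := τ10 * w1 + τ20 * w2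

/-- Closed-form equilibrium date-1 GDP with intervention in the two-agent
log-linear economy when `γd = 0` and there are no date-1 taxes
(`τ11 = τ21 = 0`); the formula is valid when `A2 > A1`. -/
noncomputable def Y1NoTax (w1 w2 β1 β2 τ10 τ20 γ10 γ20 A2 : ℝ) : ℝ :=
  A2 * (β2 * ((1 - τ20) * w2 + γ20 * T0 w1 w2 τ10 τ20) / (1 + β2) +
        β1 * ((1 - τ10) * w1 + γ10 * T0 w1 w2 τ10 τ20) / (1 + β1))

/-- Equilibrium date-1 GDP without any intervention:
`Y1* = (β2 w2/(1+β2) + β1 w1/(1+β1))·max(A1, A2)`. -/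
noncomputable def Y1star (w1 w2 β1 β2 A1 A2 : ℝ) : ℝ :=
  (β2 * w2 / (1 + β2) + β1 * w1 / (1 + β1)) * max A1 A2

/-- Proposition 4.4, point 1: with equal discount factors,
date-0 corruption alone determines the sign of the gap: if `γd = 0`,
`τ11 = τ21 = 0`, `A2 > A1` and `β1 = β2 = β`, then
`Y1 − Y1* = −(β/(1+β))·A2·γc0·T0 ≤ 0` with `γc0 = 1 − γ10 − γ20`; and if
`T0 > 0`, then `Y1 − Y1* < 0` if and only if the diverted fraction `γc0 > 0`. -/
theorem output_gap_equal_discount_factors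
    (w1 w2 β τ10 τ20 γ10 γ20 A1 A2 : ℝ)
    (hw1 : 0 < w1) (hw2 : 0 < w2) (hβ : β ∈ Set.Ioo (0 : ℝ) 1)
    (hτ10 : τ10 ∈ Set.Ico (0 : ℝ) 1) (hτ20 : τ20 ∈ Set.Ico (0 : ℝ) 1)
    (hγ10 : γ10 ∈ Set.Icc (0 : ℝ) 1) (hγ20 : γ20 ∈ Set.Icc (0 : ℝ) 1)
    (hsum0 : γ10 + γ20 ≤ 1)
    (hA1 : 0 < A1) (hA2 : 0 < A2) (hA : A1 < A2) :
    Y1NoTax w1 w2 β β τ10 τ20 γ10 γ20 A2 - Y1star w1 w2 β β A1 A2 =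
      -(β / (1 + β)) * A2 * ((1 - γ10 - γ20) * T0 w1 w2 τ10 τ20) ∧
    Y1NoTax w1 w2 β β τ10 τ20 γ10 γ20 A2 - Y1star w1 w2 β β A1 A2 ≤ 0 ∧
    (0 < T0 w1 w2 τ10 τ20 →
      (Y1NoTax w1 w2 β β τ10 τ20 γ10 γ20 A2 - Y1star w1 w2 β β A1 A2 < 0 ↔
        0 < 1 - γ10 - γ20)) := by
  obtain ⟨hβ0, hβ1⟩ := hβ
  have hβp : (0:ℝ) < 1 + β := by linarith
  have hmax : max A1 A2 = A2 := max_eq_right hA.le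
  have heq : Y1NoTax w1 w2 β β τ10 τ20 γ10 γ20 A2 - Y1star w1 w2 β β A1 A2 =
      -(β / (1 + β)) * A2 * ((1 - γ10 - γ20) * T0 w1 w2 τ10 τ20) := by
    simp only [Y1NoTax, Y1star, T0, hmax]
    field_simp
    ring
  refine ⟨heq, ?_, ?_⟩
  · rw [heq]
    have hT : 0 ≤ T0 w1 w2 τ10 τ20 := by
      simp only [T0]
      have := hτ10.1; have := hτ20.1
      nlinarith
    have hc : 0 ≤ 1 - γ10 - γ20 := by linarith
    have : 0 ≤ β / (1 + β) * A2 * ((1 - γ10 - γ20) * T0 w1 w2 τ10 τ20) := by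
      positivity
    linarith [this]
  · intro hT
    rw [heq]
    constructor
    · intro h
      by_contra hc
      push_neg at hc
      have hc' : 1 - γ10 - γ20 = 0 := by linarith
      rw [hc'] at h
      simp at h
    · intro hc
      have : 0 < β / (1 + β) * A2 * ((1 - γ10 - γ20) * T0 w1 w2 τ10 τ20) := by
        positivity
      linarith
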